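/- Let D and N be positive integers and let f be a formal power series in one variable over ℚ all of whose coefficients lie in (1/D)·ℤ. If all coefficients of f^N are integers, then all coefficients of f are integers. -/

import Mathlib

open Finset

private lemma coeff_step (D N p : ℕ) (hp : p.Prime) (hpD : p ∣ D) (hD : 0 < D) (hN : 0 < N)
    (f : PowerSeries ℚ)
    (h1 : ∀ n : ℕ, ∃ m : ℤ, PowerSeries.coeff n f = (m : ℚ) / (D : ℚ))
    (h2 : ∀ n : ℕ, ∃ m : ℤ, PowerSeries.coeff n (f ^ N) = (m : ℚ)) :
    ∀ n : ℕ, ∃ m : ℤ, PowerSeries.coeff n f = (m : ℚ) / ((D / p : ℕ) : ℚ) := by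
  choose b hb using h1
  have hppos : 0 < p := hp.pos
  obtain ⟨D', hD'⟩ := hpD
  have hD'pos : 0 < D' := by
    rcases Nat.eq_zero_or_pos D' with rfl | h
    · simp at hD'; omega
    · exact h
  have key : ∀ n, (p : ℤ) ∣ b n := by
    by_contra hcon
    push_neg at hcon
    have hex : ∃ n, ¬ (p : ℤ) ∣ b n := hcon
    classical
    set n0 := Nat.find hex with hn0def
    have hn0 : ¬ (p : ℤ) ∣ b n0 := Nat.find_spec hex
    have hmin : ∀ m < n0, (p : ℤ) ∣ b m := fun m hm => by
      by_contra h; exact absurd hm (not_lt.2 (Nat.find_le h))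
    obtain ⟨M, hM⟩ := h2 (N * n0)
    -- the coefficient formula
    have hcoeff := PowerSeries.coeff_pow N (N * n0) f
    -- the "diagonal" tuple
    set l0 : ℕ →₀ ℕ := Finsupp.indicator (range N) (fun _ _ => n0) with hl0def
    have hl0app : ∀ i ∈ range N, l0 i = n0 := by
      intro i hi; simp [hl0def, Finsupp.indicator_apply, hi]
    have hl0mem : l0 ∈ finsuppAntidiag (range N) (N * n0) := by
      rw [Finset.mem_finsuppAntidiag]
      constructor
      · rw [Finset.sum_congr rfl hl0app]; simp [mul_comm]
      · exact Finsupp.support_indicator_subset _ _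
    -- integer sum
    set S : ℤ := ∑ l ∈ finsuppAntidiag (range N) (N * n0), ∏ i ∈ range N, b (l i) with hSdef
    have hScast : (S : ℚ) = (D : ℚ) ^ N * PowerSeries.coeff (N * n0) (f ^ N) := by
      rw [hcoeff, hSdef, Finset.mul_sum]
      push_cast
      refine Finset.sum_congr rfl fun l _ => ?_
      rw [Finset.prod_congr rfl (fun i _ => hb (l i)), Finset.prod_div_distrib]
      rw [Finset.prod_const, Finset.card_range]
      have : ((D : ℚ)) ^ N ≠ 0 := by positivity
      field_simp
    have hpS : (p : ℤ) ∣ S := by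
      have : (S : ℚ) = ((D : ℤ) ^ N * M : ℤ) := by rw [hScast, hM]; push_cast; ring
      have hSeq : S = (D : ℤ) ^ N * M := by exact_mod_cast this
      rw [hSeq]
      exact Dvd.dvd.mul_right (dvd_pow (Int.natCast_dvd_natCast.2 ⟨D', hD'⟩) hN.ne') M
    -- split off the diagonal term
    have hsplit : S = (∏ i ∈ range N, b (l0 i)) +
        ∑ l ∈ (finsuppAntidiag (range N) (N * n0)).erase l0, ∏ i ∈ range N, b (l i) := by
      rw [hSdef, ← Finset.add_sum_erase _ _ hl0mem]
    have hdiag : (∏ i ∈ range N, b (l0 i)) = b n0 ^ N := by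
      rw [Finset.prod_congr rfl (fun i hi => by rw [hl0app i hi]), Finset.prod_const,
        Finset.card_range]
    have hrest : (p : ℤ) ∣ ∑ l ∈ (finsuppAntidiag (range N) (N * n0)).erase l0,
        ∏ i ∈ range N, b (l i) := by
      refine Finset.dvd_sum fun l hl => ?_
      obtain ⟨hlne, hlmem⟩ := Finset.mem_erase.1 hl
      rw [Finset.mem_finsuppAntidiag] at hlmem
      obtain ⟨hlsum, hlsupp⟩ := hlmem
      have hsmall : ∃ i ∈ range N, l i < n0 := by
        by_contra hno
        push_neg at hno
        apply hlne
        have hall : ∀ i ∈ range N, l i = n0 := by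
          by_contra hne
          push_neg at hne
          obtain ⟨j, hj, hjne⟩ := hne
          have hlsum' : ∑ i ∈ range N, l i = N * n0 := hlsum
          have : N * n0 < ∑ i ∈ range N, l i := by
            calc N * n0 = ∑ i ∈ range N, n0 := by simp [mul_comm]
            _ < ∑ i ∈ range N, l i := by
                refine Finset.sum_lt_sum (fun i hi => hno i hi) ⟨j, hj, ?_⟩
                exact lt_of_le_of_ne (hno j hj) (Ne.symm hjne)
          omega
        ext i
        by_cases hi : i ∈ range N
        · rw [hall i hi, hl0app i hi]
        · rw [Finsupp.notMem_support_iff.1 (fun hmem => hi (hlsupp hmem))]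
          simp [hl0def, Finsupp.indicator_apply, hi]
      obtain ⟨i, hi, hilt⟩ := hsmall
      exact dvd_trans (hmin (l i) hilt) (Finset.dvd_prod_of_mem _ hi)
    have hfin : (p : ℤ) ∣ b n0 ^ N := by
      rw [hsplit, hdiag] at hpS
      exact (dvd_add_left hrest).mp hpS
    exact hn0 (Int.Prime.dvd_pow' hp hfin)
  -- conclude
  intro n
  obtain ⟨c, hc⟩ := key n
  refine ⟨c, ?_⟩
  have hb' := hb n
  rw [hc] at hb'
  rw [hb']
  have : ((D / p : ℕ) : ℚ) = (D' : ℚ) := by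
    rw [hD', Nat.mul_div_cancel_left _ hppos]
  rw [this, hD']
  have hpne : (p : ℚ) ≠ 0 := by positivity
  have hDne : (D' : ℚ) ≠ 0 := by positivity
  push_cast
  field_simp

theorem sl2z_invariant_units_stmt12 (D N : ℕ) (hD : 0 < D) (hN : 0 < N)
    (f : PowerSeries ℚ)
    (h1 : ∀ n : ℕ, ∃ m : ℤ, PowerSeries.coeff n f = (m : ℚ) / (D : ℚ))
    (h2 : ∀ n : ℕ, ∃ m : ℤ, PowerSeries.coeff n (f ^ N) = (m : ℚ)) :
    ∀ n : ℕ, ∃ m : ℤ, PowerSeries.coeff n f = (m : ℚ) := by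
  induction D using Nat.strong_induction_on with
  | _ D ih =>
    rcases eq_or_lt_of_le (Nat.one_le_iff_ne_zero.2 hD.ne') with h1eq | hgt
    · intro n
      obtain ⟨m, hm⟩ := h1 n
      exact ⟨m, by rw [hm, ← h1eq]; simp⟩
    · obtain ⟨p, hp, hpD⟩ := Nat.exists_prime_and_dvd (by omega : D ≠ 1)
      have hstep := coeff_step D N p hp hpD hD hN f h1 h2
      have hDp : 0 < D / p := Nat.div_pos (Nat.le_of_dvd hD hpD) hp.pos
      have hlt : D / p < D := Nat.div_lt_self hD hp.one_lt
      exact ih (D / p) hlt hDp hstep
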